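/- Let X, X', Y, Z be finite-valued random variables such that I(Y; Z | (X, X')) = 0. Then I(X; Y | Z) ≤ I(X; X' | Z) + I(X; Y | X'). -/

import Mathlib

/-
Discrete probability setup: a finite sample space `Ω` with weight function `p`
(nonnegative, summing to 1).  Random variables are functions out of `Ω` into
nonempty finite sets.  `pr p X x = P(X = x)`, `ent` is Shannon entropy
(natural log, with `0 · log 0 = 0` since `Real.log 0 = 0`), `mi` is mutual
information `I(X;Y) = H(X) + H(Y) - H(X,Y)`, and `cmi` is conditional mutual
information `I(X;Y|W) = ∑ w, P(W=w) · I(X;Y | W=w)` computed with respect to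
the conditional distribution `condp p W w` (terms with `P(W=w)=0` vanish).
`klDivF` is the discrete Kullback–Leibler divergence with the convention that
terms with `p s = 0` contribute `0` (indeed `0 * log 0 = 0` in Lean).
-/

open scoped Classical
open Finset

noncomputable def pr {Ω α : Type*} [Fintype Ω] (p : Ω → ℝ) (X : Ω → α) (x : α) : ℝ :=
  ∑ ω, if X ω = x then p ω else 0

noncomputable def ent {Ω α : Type*} [Fintype Ω] [Fintype α] (p : Ω → ℝ) (X : Ω → α) : ℝ :=
  -∑ x, pr p X x * Real.log (pr p X x)

noncomputable def mi {Ω α β : Type*} [Fintype Ω] [Fintype α] [Fintype β]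
    (p : Ω → ℝ) (X : Ω → α) (Y : Ω → β) : ℝ :=
  ent p X + ent p Y - ent p (fun ω => (X ω, Y ω))

noncomputable def condp {Ω γ : Type*} [Fintype Ω] (p : Ω → ℝ) (W : Ω → γ) (w : γ) : Ω → ℝ :=
  fun ω => if W ω = w then p ω / pr p W w else 0

noncomputable def cmi {Ω α β γ : Type*} [Fintype Ω] [Fintype α] [Fintype β] [Fintype γ]
    (p : Ω → ℝ) (X : Ω → α) (Y : Ω → β) (W : Ω → γ) : ℝ :=
  ∑ w, pr p W w * mi (condp p W w) X Y

noncomputable def klDivF {S : Type*} [Fintype S] (p q : S → ℝ) : ℝ :=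
  ∑ s, p s * Real.log (p s / q s)

set_option linter.unusedSectionVars false

section helpers

variable {Ω α β γ : Type*} [Fintype Ω] [Fintype α] [Fintype β] [Fintype γ]

lemma pr_nonneg (p : Ω → ℝ) (hp : ∀ ω, 0 ≤ p ω) (X : Ω → α) (x : α) : 0 ≤ pr p X x :=
  Finset.sum_nonneg fun ω _ => by split_ifs; exacts [hp ω, le_rfl]

lemma pr_eq_zero_imp (p : Ω → ℝ) (hp : ∀ ω, 0 ≤ p ω) {X : Ω → α} {x : α}
    (h : pr p X x = 0) {ω : Ω} (hω : X ω = x) : p ω = 0 := by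
  have h' := (Finset.sum_eq_zero_iff_of_nonneg (fun ω' _ => by
    split_ifs; exacts [hp ω', le_rfl])).mp h ω (Finset.mem_univ ω)
  simpa [hω] using h'

lemma pr_sum (p : Ω → ℝ) (X : Ω → α) : ∑ x, pr p X x = ∑ ω, p ω := by
  unfold pr
  rw [Finset.sum_comm]
  simp

lemma pr_pair_fst (p : Ω → ℝ) (X : Ω → α) (Y : Ω → β) (x : α) :
    ∑ y, pr p (fun ω => (X ω, Y ω)) (x, y) = pr p X x := by
  unfold pr
  rw [Finset.sum_comm]
  refine Finset.sum_congr rfl fun ω _ => ?_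
  by_cases h : X ω = x <;> simp [h, Prod.ext_iff]

lemma pr_pair_snd (p : Ω → ℝ) (X : Ω → α) (Y : Ω → β) (y : β) :
    ∑ x, pr p (fun ω => (X ω, Y ω)) (x, y) = pr p Y y := by
  unfold pr
  rw [Finset.sum_comm]
  refine Finset.sum_congr rfl fun ω _ => ?_
  by_cases h : Y ω = y <;> simp [h, Prod.ext_iff]

lemma pr_pair_le_fst (p : Ω → ℝ) (hp : ∀ ω, 0 ≤ p ω) (X : Ω → α) (Y : Ω → β) (x : α) (y : β) :
    pr p (fun ω => (X ω, Y ω)) (x, y) ≤ pr p X x := by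
  refine Finset.sum_le_sum fun ω _ => ?_
  by_cases h1 : (X ω, Y ω) = (x, y) <;> by_cases h2 : X ω = x <;>
    simp_all [Prod.ext_iff] <;> first | exact hp ω | exact le_rfl

lemma pr_pair_le_snd (p : Ω → ℝ) (hp : ∀ ω, 0 ≤ p ω) (X : Ω → α) (Y : Ω → β) (x : α) (y : β) :
    pr p (fun ω => (X ω, Y ω)) (x, y) ≤ pr p Y y := by
  refine Finset.sum_le_sum fun ω _ => ?_
  by_cases h1 : (X ω, Y ω) = (x, y) <;> by_cases h2 : Y ω = y <;>
    simp_all [Prod.ext_iff] <;> first | exact hp ω | exact le_rfl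

end helpers
section helpers2
variable {Ω α β γ : Type*} [Fintype Ω] [Fintype α] [Fintype β] [Fintype γ]

lemma ent_comp (p : Ω → ℝ) (U : Ω → α) (f : α → β) (hf : Function.Injective f) :
    ent p (fun ω => f (U ω)) = ent p U := by
  have h1 : ∀ a, pr p (fun ω => f (U ω)) (f a) = pr p U a := fun a =>
    Finset.sum_congr rfl fun ω _ => by simp [hf.eq_iff]
  have h2 : ∀ b, (∀ a, f a ≠ b) → pr p (fun ω => f (U ω)) b = 0 := fun b hb =>
    Finset.sum_eq_zero fun ω _ => by simp [hb (U ω)]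
  unfold ent
  congr 1
  calc ∑ b, pr p (fun ω => f (U ω)) b * Real.log (pr p (fun ω => f (U ω)) b)
      = ∑ b ∈ Finset.univ.image f,
          pr p (fun ω => f (U ω)) b * Real.log (pr p (fun ω => f (U ω)) b) := by
        refine (Finset.sum_subset (Finset.subset_univ _) fun b _ hb => ?_).symm
        have : ∀ a, f a ≠ b := fun a ha => hb (Finset.mem_image.mpr ⟨a, Finset.mem_univ a, ha⟩)
        simp [h2 b this]
    _ = ∑ a, pr p (fun ω => f (U ω)) (f a) * Real.log (pr p (fun ω => f (U ω)) (f a)) :=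
        Finset.sum_image fun a _ a' _ h => hf h
    _ = ∑ a, pr p U a * Real.log (pr p U a) := by simp [h1]

lemma pr_condp (p : Ω → ℝ) (W : Ω → γ) (w : γ) (X : Ω → α) (x : α) :
    pr (condp p W w) X x = pr p (fun ω => (X ω, W ω)) (x, w) / pr p W w := by
  unfold pr condp
  rw [Finset.sum_div]
  refine Finset.sum_congr rfl fun ω _ => ?_
  by_cases h1 : X ω = x <;> by_cases h2 : W ω = w <;> simp [h1, h2, Prod.ext_iff, pr]

lemma condp_nonneg (p : Ω → ℝ) (hp : ∀ ω, 0 ≤ p ω) (W : Ω → γ) (w : γ) (ω : Ω) :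
    0 ≤ condp p W w ω := by
  unfold condp
  split_ifs with h
  · exact div_nonneg (hp ω) (pr_nonneg p hp W w)
  · exact le_rfl

lemma condp_sum (p : Ω → ℝ) (W : Ω → γ) (w : γ) (h : pr p W w ≠ 0) :
    ∑ ω, condp p W w ω = 1 := by
  unfold condp
  have : ∑ ω, (if W ω = w then p ω / pr p W w else 0)
      = (∑ ω, if W ω = w then p ω else 0) / pr p W w := by
    rw [Finset.sum_div]
    exact Finset.sum_congr rfl fun ω _ => by split_ifs <;> simp
  rw [this]
  exact div_self (by rw [← pr] at *; exact h)

end helpers2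
section helpers3
variable {Ω α β γ : Type*} [Fintype Ω] [Fintype α] [Fintype β] [Fintype γ]

lemma pr_pair_eq_zero (p : Ω → ℝ) (hp : ∀ ω, 0 ≤ p ω) (X : Ω → α) (W : Ω → γ)
    {w : γ} (h : pr p W w = 0) (x : α) : pr p (fun ω => (X ω, W ω)) (x, w) = 0 := by
  refine Finset.sum_eq_zero fun ω _ => ?_
  by_cases h1 : (X ω, W ω) = (x, w)
  · simp only [h1, if_true]
    exact pr_eq_zero_imp p hp h (Prod.ext_iff.mp h1).2
  · simp [h1]

lemma condEnt (p : Ω → ℝ) (hp : ∀ ω, 0 ≤ p ω) (X : Ω → α) (W : Ω → γ) :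
    ∑ w, pr p W w * ent (condp p W w) X
      = ent p (fun ω => (X ω, W ω)) - ent p W := by
  have key : ∀ w x, pr p W w * ((pr p (fun ω => (X ω, W ω)) (x, w) / pr p W w) *
        Real.log (pr p (fun ω => (X ω, W ω)) (x, w) / pr p W w))
      = pr p (fun ω => (X ω, W ω)) (x, w) * Real.log (pr p (fun ω => (X ω, W ω)) (x, w))
        - pr p (fun ω => (X ω, W ω)) (x, w) * Real.log (pr p W w) := by
    intro w x
    by_cases h0 : pr p W w = 0
    · simp [h0, pr_pair_eq_zero p hp X W h0 x]
    by_cases hJ0 : pr p (fun ω => (X ω, W ω)) (x, w) = 0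
    · simp [hJ0]
    rw [Real.log_div hJ0 h0]
    field_simp
  have hent : ∀ w, ent (condp p W w) X = -∑ x, (pr p (fun ω => (X ω, W ω)) (x, w) / pr p W w) *
      Real.log (pr p (fun ω => (X ω, W ω)) (x, w) / pr p W w) := by
    intro w
    unfold ent
    congr 1
    exact Finset.sum_congr rfl fun x _ => by rw [pr_condp]
  have h4 : ∀ w, ∑ x, pr p (fun ω => (X ω, W ω)) (x, w) * Real.log (pr p W w)
      = pr p W w * Real.log (pr p W w) := by
    intro w
    rw [← Finset.sum_mul, pr_pair_snd]
  calc ∑ w, pr p W w * ent (condp p W w) X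
      = ∑ w, ∑ x, -(pr p W w * ((pr p (fun ω => (X ω, W ω)) (x, w) / pr p W w) *
          Real.log (pr p (fun ω => (X ω, W ω)) (x, w) / pr p W w))) := by
        refine Finset.sum_congr rfl fun w _ => ?_
        rw [hent w, mul_neg, Finset.mul_sum, neg_eq_iff_eq_neg, ← Finset.sum_neg_distrib]
        exact Finset.sum_congr rfl fun x _ => by ring
    _ = ∑ w, ∑ x, (pr p (fun ω => (X ω, W ω)) (x, w) * Real.log (pr p W w)
          - pr p (fun ω => (X ω, W ω)) (x, w) * Real.log (pr p (fun ω => (X ω, W ω)) (x, w))) := by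
        refine Finset.sum_congr rfl fun w _ => Finset.sum_congr rfl fun x _ => ?_
        rw [key w x]; ring
    _ = (∑ w, pr p W w * Real.log (pr p W w))
          - ∑ w, ∑ x, pr p (fun ω => (X ω, W ω)) (x, w) *
              Real.log (pr p (fun ω => (X ω, W ω)) (x, w)) := by
        simp only [Finset.sum_sub_distrib]
        congr 1
        exact Finset.sum_congr rfl fun w _ => h4 w
    _ = ent p (fun ω => (X ω, W ω)) - ent p W := by
        unfold ent
        rw [Fintype.sum_prod_type, Finset.sum_comm]
        ring

end helpers3
section helpers4
variable {Ω α β γ : Type*} [Fintype Ω] [Fintype α] [Fintype β] [Fintype γ]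

lemma cmi_eq (p : Ω → ℝ) (hp : ∀ ω, 0 ≤ p ω) (X : Ω → α) (Y : Ω → β) (W : Ω → γ) :
    cmi p X Y W = ent p (fun ω => (X ω, W ω)) + ent p (fun ω => (Y ω, W ω))
      - ent p (fun ω => ((X ω, Y ω), W ω)) - ent p W := by
  have h1 := condEnt p hp X W
  have h2 := condEnt p hp Y W
  have h3 := condEnt p hp (fun ω => (X ω, Y ω)) W
  unfold cmi mi
  have : ∀ w, pr p W w * (ent (condp p W w) X + ent (condp p W w) Y
      - ent (condp p W w) (fun ω => (X ω, Y ω)))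
      = pr p W w * ent (condp p W w) X + pr p W w * ent (condp p W w) Y
        - pr p W w * ent (condp p W w) (fun ω => (X ω, Y ω)) := fun w => by ring
  rw [Finset.sum_congr rfl fun w _ => this w, Finset.sum_sub_distrib, Finset.sum_add_distrib,
    h1, h2, h3]
  ring

lemma mi_nonneg (p : Ω → ℝ) (hp : ∀ ω, 0 ≤ p ω) (hsum : ∑ ω, p ω = 1)
    (X : Ω → α) (Y : Ω → β) : 0 ≤ mi p X Y := by
  set J : α → β → ℝ := fun x y => pr p (fun ω => (X ω, Y ω)) (x, y) with hJdef
  have hJ : ∀ x y, J x y = pr p (fun ω => (X ω, Y ω)) (x, y) := fun _ _ => rfl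
  have key : ∀ x y, J x y - pr p X x * pr p Y y
      ≤ J x y * Real.log (J x y) - J x y * Real.log (pr p X x) - J x y * Real.log (pr p Y y) := by
    intro x y
    by_cases h0 : J x y = 0
    · rw [h0]
      simp only [zero_mul, sub_zero, zero_sub, neg_nonpos, sub_self]
      have := mul_nonneg (pr_nonneg p hp X x) (pr_nonneg p hp Y y)
      linarith
    have hJpos : 0 < J x y := lt_of_le_of_ne (pr_nonneg p hp _ _) (Ne.symm h0)
    have hx : 0 < pr p X x := lt_of_lt_of_le hJpos (pr_pair_le_fst p hp X Y x y)
    have hy : 0 < pr p Y y := lt_of_lt_of_le hJpos (pr_pair_le_snd p hp X Y x y)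
    have hlog : Real.log (pr p X x * pr p Y y / J x y) ≤ pr p X x * pr p Y y / J x y - 1 :=
      Real.log_le_sub_one_of_pos (by positivity)
    have hexp : Real.log (pr p X x * pr p Y y / J x y)
        = Real.log (pr p X x) + Real.log (pr p Y y) - Real.log (J x y) := by
      rw [Real.log_div (by positivity) h0, Real.log_mul hx.ne' hy.ne']
    rw [hexp] at hlog
    have hmul := mul_le_mul_of_nonneg_left hlog hJpos.le
    have hc : J x y * (pr p X x * pr p Y y / J x y) = pr p X x * pr p Y y := by
      field_simp
    nlinarith [hmul, hc]
  have hsum1 : ∑ x, ∑ y, J x y = 1 := by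
    have : ∑ xy : α × β, pr p (fun ω => (X ω, Y ω)) xy = 1 := by rw [pr_sum, hsum]
    rw [Fintype.sum_prod_type] at this
    exact this
  have hsum2 : ∑ x, ∑ y, pr p X x * pr p Y y = 1 := by
    rw [← Finset.sum_mul_sum]
    rw [pr_sum, pr_sum, hsum]
    ring
  have hbig : ∑ x, ∑ y, (J x y - pr p X x * pr p Y y)
      ≤ ∑ x, ∑ y, (J x y * Real.log (J x y) - J x y * Real.log (pr p X x)
          - J x y * Real.log (pr p Y y)) :=
    Finset.sum_le_sum fun x _ => Finset.sum_le_sum fun y _ => key x y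
  have hmarg1 : ∀ x, ∑ y, J x y * Real.log (pr p X x) = pr p X x * Real.log (pr p X x) := by
    intro x
    rw [← Finset.sum_mul, pr_pair_fst]
  have hmarg2 : ∀ y, ∑ x, J x y * Real.log (pr p Y y) = pr p Y y * Real.log (pr p Y y) := by
    intro y
    rw [← Finset.sum_mul, pr_pair_snd]
  have hexp2 : ∑ x, ∑ y, (J x y * Real.log (J x y) - J x y * Real.log (pr p X x)
      - J x y * Real.log (pr p Y y)) = mi p X Y := by
    unfold mi ent
    rw [Fintype.sum_prod_type]
    simp only [Finset.sum_sub_distrib]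
    rw [Finset.sum_congr rfl fun x _ => hmarg1 x]
    rw [show (∑ x, ∑ y, J x y * Real.log (pr p Y y)) = ∑ y, ∑ x, J x y * Real.log (pr p Y y)
      from Finset.sum_comm]
    rw [Finset.sum_congr rfl fun y _ => hmarg2 y]
    ring
  rw [hexp2] at hbig
  have : ∑ x, ∑ y, (J x y - pr p X x * pr p Y y) = 0 := by
    simp only [Finset.sum_sub_distrib]
    rw [hsum1, hsum2]
    ring
  linarith

lemma cmi_nonneg (p : Ω → ℝ) (hp : ∀ ω, 0 ≤ p ω) (X : Ω → α) (Y : Ω → β) (W : Ω → γ) :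
    0 ≤ cmi p X Y W := by
  refine Finset.sum_nonneg fun w _ => ?_
  by_cases h : pr p W w = 0
  · simp [h]
  exact mul_nonneg (pr_nonneg p hp W w)
    (mi_nonneg (condp p W w) (condp_nonneg p hp W w) (condp_sum p W w h) X Y)

end helpers4

lemma ent_eq_of_comp {Ω α β : Type*} [Fintype Ω] [Fintype α] [Fintype β]
    (p : Ω → ℝ) (U : Ω → α) (V : Ω → β) (f : α → β) (g : β → α)
    (hfg : ∀ a, g (f a) = a) (h : ∀ ω, V ω = f (U ω)) : ent p V = ent p U := by
  have hV : V = fun ω => f (U ω) := funext h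
  rw [hV]
  exact ent_comp p U f (Function.LeftInverse.injective hfg)


/-- If `I(Y; Z | (X,X')) = 0` then
`I(X; Y | Z) ≤ I(X; X' | Z) + I(X; Y | X')`. -/
theorem cmi_le_of_representation
    {Ω 𝒳 𝒳' 𝒴 𝒵 : Type*} [Fintype Ω] [Fintype 𝒳] [Fintype 𝒳'] [Fintype 𝒴] [Fintype 𝒵]
    [Nonempty 𝒳] [Nonempty 𝒳'] [Nonempty 𝒴] [Nonempty 𝒵]
    (p : Ω → ℝ) (hp : ∀ ω, 0 ≤ p ω) (hsum : ∑ ω, p ω = 1)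
    (X : Ω → 𝒳) (X' : Ω → 𝒳') (Y : Ω → 𝒴) (Z : Ω → 𝒵)
    (h : cmi p Y Z (fun ω => (X ω, X' ω)) = 0) :
    cmi p X Y Z ≤ cmi p X X' Z + cmi p X Y X' := by
  have E1 : ent p (fun ω => ((X ω, Y ω), Z ω)) = ent p (fun ω => (X ω, (Y ω, Z ω))) :=
    ent_eq_of_comp p _ _ (fun t => ((t.1, t.2.1), t.2.2)) (fun s => (s.1.1, (s.1.2, s.2)))
      (fun a => rfl) (fun ω => rfl)
  have E2 : ent p (fun ω => (Y ω, (X ω, X' ω))) = ent p (fun ω => ((X ω, Y ω), X' ω)) :=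
    ent_eq_of_comp p _ _ (fun t => (t.1.2, (t.1.1, t.2))) (fun s => ((s.2.1, s.1), s.2.2))
      (fun a => rfl) (fun ω => rfl)
  have E3 : ent p (fun ω => (Z ω, (X ω, X' ω))) = ent p (fun ω => ((X ω, X' ω), Z ω)) :=
    ent_eq_of_comp p _ _ (fun t => (t.2, t.1)) (fun s => (s.2, s.1))
      (fun a => rfl) (fun ω => rfl)
  have E4 : ent p (fun ω => ((Y ω, Z ω), (X ω, X' ω)))
      = ent p (fun ω => ((X ω, X' ω), (Y ω, Z ω))) :=
    ent_eq_of_comp p _ _ (fun t => (t.2, t.1)) (fun s => (s.2, s.1))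
      (fun a => rfl) (fun ω => rfl)
  have E5 : ent p (fun ω => (X' ω, (Y ω, Z ω))) = ent p (fun ω => ((Z ω, Y ω), X' ω)) :=
    ent_eq_of_comp p _ _ (fun t => (t.2, (t.1.2, t.1.1))) (fun s => ((s.2.2, s.2.1), s.1))
      (fun a => rfl) (fun ω => rfl)
  have E6 : ent p (fun ω => (Z ω, X' ω)) = ent p (fun ω => (X' ω, Z ω)) :=
    ent_eq_of_comp p _ _ (fun t => (t.2, t.1)) (fun s => (s.2, s.1))
      (fun a => rfl) (fun ω => rfl)
  have e1 := cmi_eq p hp X Y Z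
  have e2 := cmi_eq p hp X X' Z
  have e3 := cmi_eq p hp X Y X'
  have e4 := cmi_eq p hp Y Z (fun ω => (X ω, X' ω))
  rw [e4] at h
  have a0 := cmi_nonneg p hp X X' (fun ω => (Y ω, Z ω))
  rw [cmi_eq p hp X X' (fun ω => (Y ω, Z ω))] at a0
  have b0 := cmi_nonneg p hp Z Y X'
  rw [cmi_eq p hp Z Y X'] at b0
  rw [e1, e2, e3]
  linarith [E1, E2, E3, E4, E5, E6, h, a0, b0]
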